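/- Fractional Hamilton–Jacobi–Bellman equation. Fix t₀ < t_f, dimensions n, m, a nonempty compact set U ⊆ ℝ^m, a continuous map f̃ : ℝ × ℝⁿ × ℝ^m → ℝⁿ, an integer r ≥ 1, orders v₁, …, v_r > 0, continuous functions g₁, …, g_r : ℝ × ℝⁿ × ℝ^m → ℝ, and a continuous terminal cost h : ℝⁿ → ℝ. Assume the value function V is real-valued on [t₀, t_f] × ℝⁿ, and let (x*, u*) be an optimal admissible pair from (t₀, x₀), i.e., J(t₀, x₀; x*, u*) = V(t₀, x₀). Let t ∈ [t₀, t_f) be such that: V is differentiable at (t, x*(t)); u* is right-continuous at t; and for every ω ∈ U there exists an admissible pair (x, u) from (t, x*(t)) with u right-continuous at t and u(t) = ω. Then V satisfies the fractional HJB equation at (t, x*(t)): −∂V/∂t (t, x*(t)) = min_{ω ∈ U} { Σ_{j=1}^r (1/Γ(v_j)) (t_f − t)^{v_j−1} g_j(t, x*(t), ω) + ⟨∇_x V(t, x*(t)), f̃(t, x*(t), ω)⟩ }, and moreover the optimal cost of the system is J* = V(t₀, x₀). -/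

import Mathlib

open MeasureTheory Set

noncomputable section

/-- An **admissible pair** `(x, u)` from `(t, x₀)` for the controlled dynamics
`ẋ = f̃(τ, x, u)` on `[t, t_f]`: `u` is a measurable control taking values in the
control set `U`, and `x` is a continuous trajectory satisfying the integral form of
the dynamics, `x(τ) = x₀ + ∫_t^τ f̃(σ, x(σ), u(σ)) dσ` for all `τ ∈ [t, t_f]`. -/
structure AdmissiblePair (tf : ℝ) {n m : ℕ} (U : Set (EuclideanSpace ℝ (Fin m)))
    (ftil : ℝ → EuclideanSpace ℝ (Fin n) → EuclideanSpace ℝ (Fin m) →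
      EuclideanSpace ℝ (Fin n))
    (t : ℝ) (x0 : EuclideanSpace ℝ (Fin n)) where
  x : ℝ → EuclideanSpace ℝ (Fin n)
  u : ℝ → EuclideanSpace ℝ (Fin m)
  u_mem : ∀ τ ∈ Icc t tf, u τ ∈ U
  u_meas : Measurable ((Icc t tf).restrict u)
  x_cont : ContinuousOn x (Icc t tf)
  x_eq : ∀ τ ∈ Icc t tf, x τ = x0 + ∫ σ in t..τ, ftil σ (x σ) (u σ)

/-- The **generalized (fractional-order) performance index** of an admissible pair:
`J(t, x₀; x, u) = Σ_j (1/Γ(v_j)) ∫_t^{t_f} (t_f - τ)^(v_j - 1) g_j(τ, x(τ), u(τ)) dτ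
  + h(x(t_f))`, with kernels anchored at the fixed final time `t_f`. -/
def fracCost (tf : ℝ) {n m : ℕ} {U : Set (EuclideanSpace ℝ (Fin m))}
    {ftil : ℝ → EuclideanSpace ℝ (Fin n) → EuclideanSpace ℝ (Fin m) →
      EuclideanSpace ℝ (Fin n)}
    {r : ℕ} (v : Fin r → ℝ)
    (g : Fin r → ℝ → EuclideanSpace ℝ (Fin n) → EuclideanSpace ℝ (Fin m) → ℝ)
    (h : EuclideanSpace ℝ (Fin n) → ℝ)
    {t : ℝ} {x0 : EuclideanSpace ℝ (Fin n)} (p : AdmissiblePair tf U ftil t x0) : ℝ :=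
  (∑ j, (1 / Real.Gamma (v j)) *
      ∫ τ in t..tf, (tf - τ) ^ (v j - 1) * g j τ (p.x τ) (p.u τ)) + h (p.x tf)

/-- The **value function**: the infimum, in the extended reals, of the generalized
performance index over all admissible pairs from `(t, x₀)`. -/
def fracValue (tf : ℝ) {n m : ℕ} (U : Set (EuclideanSpace ℝ (Fin m)))
    (ftil : ℝ → EuclideanSpace ℝ (Fin n) → EuclideanSpace ℝ (Fin m) →
      EuclideanSpace ℝ (Fin n))
    {r : ℕ} (v : Fin r → ℝ)
    (g : Fin r → ℝ → EuclideanSpace ℝ (Fin n) → EuclideanSpace ℝ (Fin m) → ℝ)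
    (h : EuclideanSpace ℝ (Fin n) → ℝ)
    (t : ℝ) (x0 : EuclideanSpace ℝ (Fin n)) : EReal :=
  ⨅ p : AdmissiblePair tf U ftil t x0, ((fracCost tf v g h p : ℝ) : EReal)

section Aux

variable {tf : ℝ} {n m : ℕ} {U : Set (EuclideanSpace ℝ (Fin m))}
  {ftil : ℝ → EuclideanSpace ℝ (Fin n) → EuclideanSpace ℝ (Fin m) → EuclideanSpace ℝ (Fin n)}
  {t : ℝ} {x0 : EuclideanSpace ℝ (Fin n)}

/-- Composition of a continuous function with the trajectory/control of an admissible pair is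
a.e. strongly measurable on `[t, tf]`. -/
theorem AdmissiblePair.aesm {E' : Type*} [NormedAddCommGroup E']
    (p : AdmissiblePair tf U ftil t x0)
    (G : ℝ → EuclideanSpace ℝ (Fin n) → EuclideanSpace ℝ (Fin m) → E')
    (hG : Continuous fun q : ℝ × EuclideanSpace ℝ (Fin n) × EuclideanSpace ℝ (Fin m) =>
      G q.1 q.2.1 q.2.2) [MeasurableSpace E'] [BorelSpace E'] [SecondCountableTopology E'] :
    AEStronglyMeasurable (fun τ => G τ (p.x τ) (p.u τ)) (volume.restrict (Icc t tf)) := by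
  have hs : MeasurableSet (Icc t tf) := measurableSet_Icc
  rw [← map_comap_subtype_coe hs,
    (MeasurableEmbedding.subtype_coe hs).aestronglyMeasurable_map_iff]
  have hx : Measurable ((Icc t tf).restrict p.x) :=
    (ContinuousOn.restrict p.x_cont).measurable
  have : Measurable fun τ : Icc t tf => G τ.1 (p.x τ.1) (p.u τ.1) :=
    hG.measurable.comp (measurable_subtype_coe.prodMk (hx.prodMk p.u_meas))
  exact this.aestronglyMeasurable


/-- A continuous function composed with an admissible pair is bounded on `[t, tf]`. -/
theorem AdmissiblePair.bound {E' : Type*} [NormedAddCommGroup E']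
    (p : AdmissiblePair tf U ftil t x0)
    (G : ℝ → EuclideanSpace ℝ (Fin n) → EuclideanSpace ℝ (Fin m) → E')
    (hG : Continuous fun q : ℝ × EuclideanSpace ℝ (Fin n) × EuclideanSpace ℝ (Fin m) =>
      G q.1 q.2.1 q.2.2) (hU : IsCompact U) :
    ∃ C, ∀ τ ∈ Icc t tf, ‖G τ (p.x τ) (p.u τ)‖ ≤ C := by
  have hK : IsCompact ((Icc t tf) ×ˢ ((p.x '' Icc t tf) ×ˢ U)) :=
    (isCompact_Icc.prod ((isCompact_Icc.image_of_continuousOn p.x_cont).prod hU))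
  obtain ⟨C, hC⟩ := hK.exists_bound_of_continuousOn (hG.continuousOn)
  refine ⟨C, fun τ hτ => hC (τ, p.x τ, p.u τ) ?_⟩
  exact ⟨hτ, ⟨mem_image_of_mem _ hτ, p.u_mem τ hτ⟩⟩

/-- Interval integrability of such a composition on subintervals of `[t, tf]`. -/
theorem AdmissiblePair.intInt {E' : Type*} [NormedAddCommGroup E']
    [MeasurableSpace E'] [BorelSpace E'] [SecondCountableTopology E']
    (p : AdmissiblePair tf U ftil t x0)
    (G : ℝ → EuclideanSpace ℝ (Fin n) → EuclideanSpace ℝ (Fin m) → E')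
    (hG : Continuous fun q : ℝ × EuclideanSpace ℝ (Fin n) × EuclideanSpace ℝ (Fin m) =>
      G q.1 q.2.1 q.2.2) (hU : IsCompact U) {a b : ℝ}
    (ha : a ∈ Icc t tf) (hb : b ∈ Icc t tf) :
    IntervalIntegrable (fun τ => G τ (p.x τ) (p.u τ)) volume a b := by
  obtain ⟨C, hC⟩ := p.bound G hG hU
  have hsub : uIcc a b ⊆ Icc t tf := uIcc_subset_Icc ha hb
  have hmeas := p.aesm G hG
  apply IntegrableOn.intervalIntegrable
  have : IntegrableOn (fun τ => G τ (p.x τ) (p.u τ)) (Icc t tf) := by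
    refine Integrable.mono' (integrable_const C) hmeas ?_
    refine (ae_restrict_iff' measurableSet_Icc).2 ?_
    exact Filter.Eventually.of_forall hC
  exact this.mono_set hsub
/-- The fractional kernel `(tf - τ)^(v-1)` is interval integrable for `v > 0`. -/
theorem kernel_intInt {v : ℝ} (hv : 0 < v) (tf a b : ℝ) :
    IntervalIntegrable (fun τ => (tf - τ) ^ (v - 1)) volume a b := by
  have h : IntervalIntegrable (fun x : ℝ => x ^ (v - 1)) volume (tf - a) (tf - b) :=
    intervalIntegral.intervalIntegrable_rpow' (by linarith)
  simpa using h.comp_sub_left tf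

/-- Interval integrability of the kernel times a bounded a.e.-measurable running cost. -/
theorem kernel_mul_intInt {v : ℝ} (hv : 0 < v) {tf t : ℝ} {φ : ℝ → ℝ} {C : ℝ}
    (hmeas : AEStronglyMeasurable φ (volume.restrict (Icc t tf)))
    (hC : ∀ τ ∈ Icc t tf, ‖φ τ‖ ≤ C) {a b : ℝ}
    (ha : a ∈ Icc t tf) (hb : b ∈ Icc t tf) :
    IntervalIntegrable (fun τ => (tf - τ) ^ (v - 1) * φ τ) volume a b := by
  have hker : IntervalIntegrable (fun τ => (tf - τ) ^ (v - 1)) volume a b :=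
    kernel_intInt hv tf a b
  have hsub : Set.uIoc a b ⊆ Icc t tf :=
    Set.uIoc_subset_uIcc.trans (uIcc_subset_Icc ha hb)
  rw [intervalIntegrable_iff] at hker ⊢
  have hφm : AEStronglyMeasurable φ (volume.restrict (Set.uIoc a b)) :=
    hmeas.mono_measure (Measure.restrict_mono hsub le_rfl)
  have hkm : AEStronglyMeasurable (fun τ => (tf - τ) ^ (v - 1))
      (volume.restrict (Set.uIoc a b)) := hker.aestronglyMeasurable
  refine Integrable.mono' (hker.norm.const_mul C) (hkm.mul hφm) ?_
  refine (ae_restrict_iff' measurableSet_uIoc).2 (Filter.Eventually.of_forall fun τ hτ => ?_)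
  rw [norm_mul]
  calc ‖(tf - τ) ^ (v - 1)‖ * ‖φ τ‖ ≤ ‖(tf - τ) ^ (v - 1)‖ * C := by
        exact mul_le_mul_of_nonneg_left (hC τ (hsub hτ)) (norm_nonneg _)
    _ = C * ‖(tf - τ) ^ (v - 1)‖ := mul_comm _ _
variable (hftil : Continuous fun q : ℝ × EuclideanSpace ℝ (Fin n) × EuclideanSpace ℝ (Fin m) =>
    ftil q.1 q.2.1 q.2.2) (hU : IsCompact U)

/-- Restriction of an admissible pair to a later starting time. -/
def AdmissiblePair.restrictTo (p : AdmissiblePair tf U ftil t x0) {s : ℝ}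
    (hs : s ∈ Icc t tf) : AdmissiblePair tf U ftil s (p.x s) where
  x := p.x
  u := p.u
  u_mem := fun τ hτ => p.u_mem τ ⟨hs.1.trans hτ.1, hτ.2⟩
  u_meas := by
    have hincl : Measurable fun τ : Icc s tf => (⟨τ.1, hs.1.trans τ.2.1, τ.2.2⟩ : Icc t tf) :=
      (Continuous.subtype_mk continuous_subtype_val _).measurable
    exact p.u_meas.comp hincl
  x_cont := p.x_cont.mono (Icc_subset_Icc hs.1 le_rfl)
  x_eq := by
    intro τ hτ
    have hτ' : τ ∈ Icc t tf := ⟨hs.1.trans hτ.1, hτ.2⟩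
    have h1 := p.x_eq τ hτ'
    have h2 := p.x_eq s hs
    have hadd : (∫ σ in t..s, ftil σ (p.x σ) (p.u σ)) + (∫ σ in s..τ, ftil σ (p.x σ) (p.u σ))
        = ∫ σ in t..τ, ftil σ (p.x σ) (p.u σ) :=
      intervalIntegral.integral_add_adjacent_intervals
        (p.intInt ftil hftil hU (left_mem_Icc.2 (hs.1.trans hs.2)) hs)
        (p.intInt ftil hftil hU hs hτ')
    rw [h1, h2, ← hadd]
    abel

theorem AdmissiblePair.cost_restrictTo {r : ℕ} (v : Fin r → ℝ) (hv : ∀ j, 0 < v j)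
    (g : Fin r → ℝ → EuclideanSpace ℝ (Fin n) → EuclideanSpace ℝ (Fin m) → ℝ)
    (hg : ∀ j, Continuous fun q : ℝ × EuclideanSpace ℝ (Fin n) × EuclideanSpace ℝ (Fin m) =>
      g j q.1 q.2.1 q.2.2)
    (h : EuclideanSpace ℝ (Fin n) → ℝ)
    (p : AdmissiblePair tf U ftil t x0) {s : ℝ} (hs : s ∈ Icc t tf) :
    fracCost tf v g h p
      = (∑ j, (1 / Real.Gamma (v j)) *
          ∫ τ in t..s, (tf - τ) ^ (v j - 1) * g j τ (p.x τ) (p.u τ))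
        + fracCost tf v g h (p.restrictTo hftil hU hs) := by
  have ht : t ∈ Icc t tf := left_mem_Icc.2 (hs.1.trans hs.2)
  have htf : tf ∈ Icc t tf := right_mem_Icc.2 (hs.1.trans hs.2)
  have key : ∀ j, (∫ τ in t..tf, (tf - τ) ^ (v j - 1) * g j τ (p.x τ) (p.u τ))
      = (∫ τ in t..s, (tf - τ) ^ (v j - 1) * g j τ (p.x τ) (p.u τ))
        + ∫ τ in s..tf, (tf - τ) ^ (v j - 1) * g j τ (p.x τ) (p.u τ) := by
    intro j
    obtain ⟨C, hC⟩ := p.bound (g j) (hg j) hU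
    exact (intervalIntegral.integral_add_adjacent_intervals
      (kernel_mul_intInt (hv j) (p.aesm (g j) (hg j)) hC ht hs)
      (kernel_mul_intInt (hv j) (p.aesm (g j) (hg j)) hC hs htf)).symm
  simp only [fracCost, AdmissiblePair.restrictTo]
  simp only [key, mul_add, Finset.sum_add_distrib]
  ring
theorem continuousOn_union_closed {α β : Type*} [TopologicalSpace α] [TopologicalSpace β]
    {f : α → β} {A B : Set α} (hA : IsClosed A) (hB : IsClosed B)
    (hfA : ContinuousOn f A) (hfB : ContinuousOn f B) : ContinuousOn f (A ∪ B) := by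
  intro a ha
  have key : ∀ C : Set α, IsClosed C → ContinuousOn f C → ContinuousWithinAt f C a := by
    intro C hC hfC
    by_cases haC : a ∈ C
    · exact hfC a haC
    · exact continuousWithinAt_of_notMem_closure (by rwa [hC.closure_eq])
  exact (key A hA hfA).union (key B hB hfB)

/-- Concatenation of an admissible pair from `(t, x₀)` (used on `[t, s]`) with an
admissible pair from `(s, p.x s)`. -/
def AdmissiblePair.concat (p : AdmissiblePair tf U ftil t x0) {s : ℝ} (hs : s ∈ Icc t tf)
    (q : AdmissiblePair tf U ftil s (p.x s)) : AdmissiblePair tf U ftil t x0 where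
  x := fun τ => if τ < s then p.x τ else q.x τ
  u := fun τ => if τ < s then p.u τ else q.u (max s τ)
  u_mem := by
    intro τ hτ
    by_cases hτs : τ < s
    · simpa [hτs] using p.u_mem τ hτ
    · simpa [hτs] using q.u_mem (max s τ) ⟨le_max_left _ _, max_le hs.2 hτ.2⟩
  u_meas := by
    have hA : MeasurableSet {τ : Icc t tf | τ.1 < s} :=
      measurable_subtype_coe measurableSet_Iio
    have hmax : Measurable fun τ : Icc t tf =>
        (⟨max s τ.1, le_max_left _ _, max_le hs.2 τ.2.2⟩ : Icc s tf) :=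
      (Continuous.subtype_mk (continuous_const.max continuous_subtype_val) _).measurable
    exact Measurable.ite hA p.u_meas (q.u_meas.comp hmax)
  x_cont := by
    have hqs : q.x s = p.x s := by
      have := q.x_eq s (left_mem_Icc.2 hs.2)
      simpa using this
    have hEqP : EqOn (fun τ => if τ < s then p.x τ else q.x τ) p.x (Icc t s) := by
      intro τ hτ
      rcases lt_or_eq_of_le hτ.2 with hlt | heq
      · simp [hlt]
      · simp [heq, hqs]
    have hEqQ : EqOn (fun τ => if τ < s then p.x τ else q.x τ) q.x (Icc s tf) := by
      intro τ hτ
      simp [not_lt.2 hτ.1]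
    rw [← Icc_union_Icc_eq_Icc hs.1 hs.2]
    exact continuousOn_union_closed isClosed_Icc isClosed_Icc
      (((p.x_cont.mono (Icc_subset_Icc le_rfl hs.2))).congr hEqP)
      ((q.x_cont).congr hEqQ)
  x_eq := by
    intro τ hτ
    set x' : ℝ → EuclideanSpace ℝ (Fin n) := fun τ => if τ < s then p.x τ else q.x τ with hx'
    set u' : ℝ → EuclideanSpace ℝ (Fin m) := fun τ => if τ < s then p.u τ else q.u (max s τ)
      with hu'
    have hqs : q.x s = p.x s := by simpa using q.x_eq s (left_mem_Icc.2 hs.2)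
    have hxP : ∀ σ ∈ Icc t s, x' σ = p.x σ := by
      intro σ hσ
      rcases lt_or_eq_of_le hσ.2 with hlt | heq
      · simp [x', hlt]
      · simp [x', heq, hqs]
    have hxQ : ∀ σ, s ≤ σ → x' σ = q.x σ := fun σ hσ => by simp [x', not_lt.2 hσ]
    have huQ : ∀ σ, s ≤ σ → u' σ = q.u σ := fun σ hσ => by
      simp [u', not_lt.2 hσ, max_eq_right hσ]
    have hne : ∀ᵐ σ : ℝ ∂volume, σ ≠ s := by
      rw [MeasureTheory.ae_iff]
      simpa using Real.volume_singleton
    have haeP : ∀ {b : ℝ}, t ≤ b → b ≤ s → ∀ᵐ σ ∂volume, σ ∈ Set.uIoc t b →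
        ftil σ (x' σ) (u' σ) = ftil σ (p.x σ) (p.u σ) := by
      intro b htb hb
      filter_upwards [hne] with σ hσne hσ
      rw [Set.uIoc_of_le htb] at hσ
      have hlt : σ < s := lt_of_le_of_ne (hσ.2.trans hb) hσne
      simp [x', u', hlt]
    have haeQ : s ≤ τ → ∀ᵐ σ ∂volume, σ ∈ Set.uIoc s τ →
        ftil σ (x' σ) (u' σ) = ftil σ (q.x σ) (q.u σ) := by
      intro hsτ
      refine Filter.Eventually.of_forall fun σ hσ => ?_
      rw [Set.uIoc_of_le hsτ] at hσ
      rw [hxQ σ hσ.1.le, huQ σ hσ.1.le]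
    show x' τ = x0 + ∫ σ in t..τ, ftil σ (x' σ) (u' σ)
    by_cases hcase : τ ≤ s
    · rw [hxP τ ⟨hτ.1, hcase⟩, p.x_eq τ ⟨hτ.1, hcase.trans hs.2⟩]
      congr 1
      exact (intervalIntegral.integral_congr_ae (haeP hτ.1 hcase)).symm
    · push_neg at hcase
      have hτ' : τ ∈ Icc s tf := ⟨hcase.le, hτ.2⟩
      have h1 : x' τ = q.x τ := hxQ τ hcase.le
      have h2 := q.x_eq τ hτ'
      have h3 := p.x_eq s hs
      have hae1 : (fun σ => ftil σ (p.x σ) (p.u σ))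
          =ᵐ[volume.restrict (Set.uIoc t s)] fun σ => ftil σ (x' σ) (u' σ) := by
        filter_upwards [MeasureTheory.ae_restrict_mem measurableSet_uIoc,
          MeasureTheory.ae_restrict_of_ae (haeP hs.1 le_rfl)] with σ hmem himp
        exact (himp hmem).symm
      have hae2 : (fun σ => ftil σ (q.x σ) (q.u σ))
          =ᵐ[volume.restrict (Set.uIoc s τ)] fun σ => ftil σ (x' σ) (u' σ) := by
        filter_upwards [MeasureTheory.ae_restrict_mem measurableSet_uIoc,
          MeasureTheory.ae_restrict_of_ae (haeQ hcase.le)] with σ hmem himp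
        exact (himp hmem).symm
      have hip : IntervalIntegrable (fun σ => ftil σ (x' σ) (u' σ)) volume t s :=
        (p.intInt ftil hftil hU (left_mem_Icc.2 (hs.1.trans hs.2)) hs).congr_ae hae1
      have hiq : IntervalIntegrable (fun σ => ftil σ (x' σ) (u' σ)) volume s τ :=
        (q.intInt ftil hftil hU (left_mem_Icc.2 hs.2) hτ').congr_ae hae2
      rw [h1, h2, ← intervalIntegral.integral_add_adjacent_intervals hip hiq,
        intervalIntegral.integral_congr_ae (haeP hs.1 le_rfl),
        intervalIntegral.integral_congr_ae (haeQ hcase.le), ← add_assoc]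
      exact congrArg (fun z => z + _) h3
theorem AdmissiblePair.concat_x (p : AdmissiblePair tf U ftil t x0) {s : ℝ} (hs : s ∈ Icc t tf)
    (q : AdmissiblePair tf U ftil s (p.x s)) :
    (p.concat hftil hU hs q).x = fun τ => if τ < s then p.x τ else q.x τ := rfl

theorem AdmissiblePair.concat_u (p : AdmissiblePair tf U ftil t x0) {s : ℝ} (hs : s ∈ Icc t tf)
    (q : AdmissiblePair tf U ftil s (p.x s)) :
    (p.concat hftil hU hs q).u = fun τ => if τ < s then p.u τ else q.u (max s τ) := rfl

theorem AdmissiblePair.cost_concat {r : ℕ} (v : Fin r → ℝ) (hv : ∀ j, 0 < v j)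
    (g : Fin r → ℝ → EuclideanSpace ℝ (Fin n) → EuclideanSpace ℝ (Fin m) → ℝ)
    (hg : ∀ j, Continuous fun q : ℝ × EuclideanSpace ℝ (Fin n) × EuclideanSpace ℝ (Fin m) =>
      g j q.1 q.2.1 q.2.2)
    (h : EuclideanSpace ℝ (Fin n) → ℝ)
    (p : AdmissiblePair tf U ftil t x0) {s : ℝ} (hs : s ∈ Icc t tf)
    (q : AdmissiblePair tf U ftil s (p.x s)) :
    fracCost tf v g h (p.concat hftil hU hs q)
      = (∑ j, (1 / Real.Gamma (v j)) *
          ∫ τ in t..s, (tf - τ) ^ (v j - 1) * g j τ (p.x τ) (p.u τ))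
        + fracCost tf v g h q := by
  set c := p.concat hftil hU hs q with hc
  have hcx : ∀ σ, c.x σ = if σ < s then p.x σ else q.x σ := fun σ => rfl
  have hcu : ∀ σ, c.u σ = if σ < s then p.u σ else q.u (max s σ) := fun σ => rfl
  have hne : ∀ᵐ σ : ℝ ∂volume, σ ≠ s := by
    rw [MeasureTheory.ae_iff]
    simpa using Real.volume_singleton
  have haeP : ∀ j, ∀ᵐ σ ∂volume, σ ∈ Set.uIoc t s →
      (tf - σ) ^ (v j - 1) * g j σ (c.x σ) (c.u σ)
        = (tf - σ) ^ (v j - 1) * g j σ (p.x σ) (p.u σ) := by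
    intro j
    filter_upwards [hne] with σ hσne hσ
    rw [Set.uIoc_of_le hs.1] at hσ
    have hlt : σ < s := lt_of_le_of_ne hσ.2 hσne
    rw [hcx, hcu, if_pos hlt, if_pos hlt]
  have haeQ : ∀ j, ∀ᵐ σ ∂volume, σ ∈ Set.uIoc s tf →
      (tf - σ) ^ (v j - 1) * g j σ (c.x σ) (c.u σ)
        = (tf - σ) ^ (v j - 1) * g j σ (q.x σ) (q.u σ) := by
    intro j
    refine Filter.Eventually.of_forall fun σ hσ => ?_
    rw [Set.uIoc_of_le hs.2] at hσ
    rw [hcx, hcu, if_neg (not_lt.2 hσ.1.le), if_neg (not_lt.2 hσ.1.le),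
      max_eq_right hσ.1.le]
  have ht : t ∈ Icc t tf := left_mem_Icc.2 (hs.1.trans hs.2)
  have htf : tf ∈ Icc t tf := right_mem_Icc.2 (hs.1.trans hs.2)
  have key : ∀ j, (∫ τ in t..tf, (tf - τ) ^ (v j - 1) * g j τ (c.x τ) (c.u τ))
      = (∫ τ in t..s, (tf - τ) ^ (v j - 1) * g j τ (p.x τ) (p.u τ))
        + ∫ τ in s..tf, (tf - τ) ^ (v j - 1) * g j τ (q.x τ) (q.u τ) := by
    intro j
    obtain ⟨Cp, hCp⟩ := p.bound (g j) (hg j) hU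
    obtain ⟨Cq, hCq⟩ := q.bound (g j) (hg j) hU
    have hip : IntervalIntegrable
        (fun τ => (tf - τ) ^ (v j - 1) * g j τ (c.x τ) (c.u τ)) volume t s := by
      refine (kernel_mul_intInt (hv j) (p.aesm (g j) (hg j)) hCp ht hs).congr_ae ?_
      filter_upwards [MeasureTheory.ae_restrict_mem measurableSet_uIoc,
        MeasureTheory.ae_restrict_of_ae (haeP j)] with σ hmem himp
      exact (himp hmem).symm
    have hiq : IntervalIntegrable
        (fun τ => (tf - τ) ^ (v j - 1) * g j τ (c.x τ) (c.u τ)) volume s tf := by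
      refine (kernel_mul_intInt (hv j) (q.aesm (g j) (hg j)) hCq
        (left_mem_Icc.2 hs.2) (right_mem_Icc.2 hs.2)).congr_ae ?_
      filter_upwards [MeasureTheory.ae_restrict_mem measurableSet_uIoc,
        MeasureTheory.ae_restrict_of_ae (haeQ j)] with σ hmem himp
      exact (himp hmem).symm
    rw [← intervalIntegral.integral_add_adjacent_intervals hip hiq,
      intervalIntegral.integral_congr_ae (haeP j),
      intervalIntegral.integral_congr_ae (haeQ j)]
  have hcxtf : c.x tf = q.x tf := by
    rw [hcx, if_neg (not_lt.2 hs.2)]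
  simp only [fracCost, key, mul_add, Finset.sum_add_distrib, hcxtf]
  ring
open Topology

include hftil hU in
/-- Dynamic programming principle, upper part: the value at `(t, x₀)` is at most the
running cost of any admissible pair up to time `s` plus the value at `(s, p.x s)`. -/
theorem dpp_le {r : ℕ} (v : Fin r → ℝ) (hv : ∀ j, 0 < v j)
    (g : Fin r → ℝ → EuclideanSpace ℝ (Fin n) → EuclideanSpace ℝ (Fin m) → ℝ)
    (hg : ∀ j, Continuous fun q : ℝ × EuclideanSpace ℝ (Fin n) × EuclideanSpace ℝ (Fin m) =>
      g j q.1 q.2.1 q.2.2)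
    (h : EuclideanSpace ℝ (Fin n) → ℝ) {t0 : ℝ}
    (V : ℝ → EuclideanSpace ℝ (Fin n) → ℝ)
    (hV : ∀ s ∈ Icc t0 tf, ∀ y, ((V s y : ℝ) : EReal) = fracValue tf U ftil v g h s y)
    (htm : t ∈ Icc t0 tf)
    (p : AdmissiblePair tf U ftil t x0) {s : ℝ} (hs : s ∈ Icc t tf) :
    V t x0 ≤ (∑ j, (1 / Real.Gamma (v j)) *
        ∫ τ in t..s, (tf - τ) ^ (v j - 1) * g j τ (p.x τ) (p.u τ)) + V s (p.x s) := by
  set C := ∑ j, (1 / Real.Gamma (v j)) *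
      ∫ τ in t..s, (tf - τ) ^ (v j - 1) * g j τ (p.x τ) (p.u τ) with hC
  have hsm : s ∈ Icc t0 tf := ⟨htm.1.trans hs.1, hs.2⟩
  have hle : ∀ q : AdmissiblePair tf U ftil s (p.x s),
      V t x0 - C ≤ fracCost tf v g h q := by
    intro q
    have h1 : ((V t x0 : ℝ) : EReal)
        ≤ ((fracCost tf v g h (p.concat hftil hU hs q) : ℝ) : EReal) := by
      rw [hV t htm x0, fracValue]
      exact iInf_le _ _
    have h2 : V t x0 ≤ fracCost tf v g h (p.concat hftil hU hs q) :=
      EReal.coe_le_coe_iff.1 h1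
    rw [p.cost_concat hftil hU v hv g hg h hs q] at h2
    linarith
  have h3 : ((V t x0 - C : ℝ) : EReal) ≤ fracValue tf U ftil v g h s (p.x s) := by
    rw [fracValue]
    exact le_iInf fun q => EReal.coe_le_coe_iff.2 (hle q)
  rw [← hV s hsm (p.x s)] at h3
  have := EReal.coe_le_coe_iff.1 h3
  linarith

theorem AdmissiblePair.x_start (p : AdmissiblePair tf U ftil t x0) (httf : t ≤ tf) :
    p.x t = x0 := by
  simpa using p.x_eq t (left_mem_Icc.2 httf)

include hftil hU in
/-- Right-derivative of the trajectory of an admissible pair at its starting time. -/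
theorem AdmissiblePair.hasDerivWithinAt_x (p : AdmissiblePair tf U ftil t x0)
    (htlt : t < tf) (hu_rc : ContinuousWithinAt p.u (Ici t) t) :
    HasDerivWithinAt p.x (ftil t (p.x t) (p.u t)) (Ici t) t := by
  set F := fun σ => ftil σ (p.x σ) (p.u σ) with hF
  have hti : t ∈ Icc t tf := left_mem_Icc.2 htlt.le
  have htfi : tf ∈ Icc t tf := right_mem_Icc.2 htlt.le
  have h1 : IntervalIntegrable F volume t tf := p.intInt ftil hftil hU hti htfi
  have hmeas : StronglyMeasurableAtFilter F (𝓝[Set.Ioi t] t) := by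
    refine ⟨Ioc t tf, Ioc_mem_nhdsGT htlt, ?_⟩
    exact (p.aesm ftil hftil).mono_measure
      (Measure.restrict_mono Ioc_subset_Icc_self le_rfl)
  have hxc : ContinuousWithinAt p.x (Ici t) t := by
    have := p.x_cont t hti
    rwa [ContinuousWithinAt, nhdsWithin_Icc_eq_nhdsGE htlt] at this
  have hcont : ContinuousWithinAt F (Ici t) t := by
    exact (hftil.continuousAt).comp_continuousWithinAt
      ((continuousWithinAt_id).prodMk (hxc.prodMk hu_rc))
  have hder : HasDerivWithinAt (fun b => ∫ σ in t..b, F σ) (F t) (Ici t) t :=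
    intervalIntegral.integral_hasDerivWithinAt_right (IntervalIntegrable.refl)
      hmeas (hcont.mono Ioi_subset_Ici_self)
  have heq : ∀ b ∈ Icc t tf, p.x b = p.x t + ∫ σ in t..b, F σ := by
    intro b hb
    rw [p.x_eq b hb, p.x_start htlt.le]
  have hder2 : HasDerivWithinAt (fun b => p.x t + ∫ σ in t..b, F σ) (F t) (Icc t tf) t :=
    (hder.const_add (p.x t)).mono Icc_subset_Ici_self
  have hder3 : HasDerivWithinAt p.x (F t) (Icc t tf) t :=
    hder2.congr_of_mem (fun b hb => heq b hb) (left_mem_Icc.2 htlt.le)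
  refine hder3.mono_of_mem_nhdsWithin ?_
  rw [← nhdsWithin_Icc_eq_nhdsGE htlt]
  exact self_mem_nhdsWithin

include hU in
/-- Right-derivative of the running fractional cost of an admissible pair at its start. -/
theorem AdmissiblePair.hasDerivWithinAt_cost {v : ℝ} (hv : 0 < v)
    {g : ℝ → EuclideanSpace ℝ (Fin n) → EuclideanSpace ℝ (Fin m) → ℝ}
    (hg : Continuous fun q : ℝ × EuclideanSpace ℝ (Fin n) × EuclideanSpace ℝ (Fin m) =>
      g q.1 q.2.1 q.2.2)
    (p : AdmissiblePair tf U ftil t x0) (htlt : t < tf)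
    (hu_rc : ContinuousWithinAt p.u (Ici t) t) :
    HasDerivWithinAt (fun s => ∫ τ in t..s, (tf - τ) ^ (v - 1) * g τ (p.x τ) (p.u τ))
      ((tf - t) ^ (v - 1) * g t (p.x t) (p.u t)) (Ici t) t := by
  set F := fun σ => (tf - σ) ^ (v - 1) * g σ (p.x σ) (p.u σ) with hF
  have hti : t ∈ Icc t tf := left_mem_Icc.2 htlt.le
  have htfi : tf ∈ Icc t tf := right_mem_Icc.2 htlt.le
  obtain ⟨C, hC⟩ := p.bound g hg hU
  have h1 : IntervalIntegrable F volume t tf :=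
    kernel_mul_intInt hv (p.aesm g hg) hC hti htfi
  have hkm : AEStronglyMeasurable (fun σ : ℝ => (tf - σ) ^ (v - 1))
      (volume.restrict (Ioc t tf)) :=
    ((measurable_const.sub measurable_id').pow measurable_const).aestronglyMeasurable
  have hmeas : StronglyMeasurableAtFilter F (𝓝[Set.Ioi t] t) := by
    refine ⟨Ioc t tf, Ioc_mem_nhdsGT htlt, ?_⟩
    exact hkm.mul ((p.aesm g hg).mono_measure
      (Measure.restrict_mono Ioc_subset_Icc_self le_rfl))
  have hxc : ContinuousWithinAt p.x (Ici t) t := by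
    have := p.x_cont t hti
    rwa [ContinuousWithinAt, nhdsWithin_Icc_eq_nhdsGE htlt] at this
  have hker : ContinuousAt (fun σ : ℝ => (tf - σ) ^ (v - 1)) t :=
    ((continuous_const.sub continuous_id).continuousAt).rpow_const
      (Or.inl (sub_ne_zero.2 htlt.ne'))
  have hcont : ContinuousWithinAt F (Ici t) t :=
    (hker.continuousWithinAt).mul
      ((hg.continuousAt).comp_continuousWithinAt
        ((continuousWithinAt_id).prodMk (hxc.prodMk hu_rc)))
  exact intervalIntegral.integral_hasDerivWithinAt_right (IntervalIntegrable.refl)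
    hmeas (hcont.mono Ioi_subset_Ici_self)

/-- If a function vanishing at `t` is nonnegative on `(t, b]` and has a right-derivative
`D` at `t`, then `D ≥ 0`. -/
theorem deriv_nonneg_of_nonneg {φ : ℝ → ℝ} {D t b : ℝ} (htb : t < b)
    (hD : HasDerivWithinAt φ D (Ici t) t) (h0 : φ t = 0)
    (hpos : ∀ s ∈ Ioc t b, 0 ≤ φ s) : 0 ≤ D := by
  have hD' : HasDerivWithinAt φ D (Ioi t) t := hD.mono Ioi_subset_Ici_self
  rw [hasDerivWithinAt_iff_tendsto_slope' (notMem_Ioi.2 le_rfl)] at hD'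
  refine ge_of_tendsto hD' ?_
  filter_upwards [Ioc_mem_nhdsGT htb, self_mem_nhdsWithin] with s hs hs'
  rw [slope_def_field, h0, sub_zero]
  exact div_nonneg (hpos s hs) (by rw [mem_Ioi] at hs'; linarith)
end Aux
open RealInnerProductSpace in
/-- **Fractional Hamilton–Jacobi–Bellman equation.** Assume the value function is
real-valued (equal to `V`) on `[t₀, t_f] × ℝⁿ`, and let `(x*, u*)` be an optimal
admissible pair from `(t₀, x₀)`, i.e. `J(t₀, x₀; x*, u*) = V(t₀, x₀)`. Let
`t ∈ [t₀, t_f)` be such that `V` is differentiable at `(t, x*(t))`, `u*` is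
right-continuous at `t`, and every `ω ∈ U` is attained at time `t` by the control
of some admissible pair from `(t, x*(t))` right-continuous at `t`. Then `V`
satisfies the fractional HJB equation at `(t, x*(t))`:
`-∂V/∂t (t, x*(t)) = min_{ω ∈ U} { Σ_j (1/Γ(v_j)) (t_f - t)^(v_j-1) g_j(t, x*(t), ω)
  + ⟨∇ₓV(t, x*(t)), f̃(t, x*(t), ω)⟩ }` (the minimum being attained), and moreover
the optimal cost of the system is `J* = V(t₀, x₀)`. -/
theorem fracHJB_equation
    (t0 tf : ℝ) (ht0f : t0 < tf) (n m : ℕ)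
    (U : Set (EuclideanSpace ℝ (Fin m))) (hUc : IsCompact U) (hUne : U.Nonempty)
    (ftil : ℝ → EuclideanSpace ℝ (Fin n) → EuclideanSpace ℝ (Fin m) →
      EuclideanSpace ℝ (Fin n))
    (hftil : Continuous fun p : ℝ × EuclideanSpace ℝ (Fin n) × EuclideanSpace ℝ (Fin m) =>
      ftil p.1 p.2.1 p.2.2)
    (r : ℕ) (hr : 1 ≤ r) (v : Fin r → ℝ) (hv : ∀ j, 0 < v j)
    (g : Fin r → ℝ → EuclideanSpace ℝ (Fin n) → EuclideanSpace ℝ (Fin m) → ℝ)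
    (hg : ∀ j, Continuous fun p : ℝ × EuclideanSpace ℝ (Fin n) × EuclideanSpace ℝ (Fin m) =>
      g j p.1 p.2.1 p.2.2)
    (h : EuclideanSpace ℝ (Fin n) → ℝ) (hh : Continuous h)
    (V : ℝ → EuclideanSpace ℝ (Fin n) → ℝ)
    (hV : ∀ s ∈ Set.Icc t0 tf, ∀ y, ((V s y : ℝ) : EReal) = fracValue tf U ftil v g h s y)
    (x0 : EuclideanSpace ℝ (Fin n)) (pstar : AdmissiblePair tf U ftil t0 x0)
    (hopt : fracCost tf v g h pstar = V t0 x0)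
    (t : ℝ) (ht : t ∈ Set.Ico t0 tf)
    (hVdiff : DifferentiableAt ℝ (fun p : ℝ × EuclideanSpace ℝ (Fin n) => V p.1 p.2)
      (t, pstar.x t))
    (hu_rc : ContinuousWithinAt pstar.u (Set.Ici t) t)
    (hreach : ∀ ω ∈ U, ∃ p : AdmissiblePair tf U ftil t (pstar.x t),
      ContinuousWithinAt p.u (Set.Ici t) t ∧ p.u t = ω) :
    IsLeast
      ((fun ω : EuclideanSpace ℝ (Fin m) =>
          (∑ j, (1 / Real.Gamma (v j)) * (tf - t) ^ (v j - 1) * g j t (pstar.x t) ω)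
            + ⟪gradient (fun y => V t y) (pstar.x t), ftil t (pstar.x t) ω⟫) '' U)
      (-(deriv (fun s => V s (pstar.x t)) t))
    ∧ ((fracCost tf v g h pstar : ℝ) : EReal) = fracValue tf U ftil v g h t0 x0 := by
  have httf : t < tf := ht.2
  have htm : t ∈ Icc t0 tf := ⟨ht.1, ht.2.le⟩
  -- Part 2: the optimal cost equals the value function at `(t0, x0)`.
  have part2 : ((fracCost tf v g h pstar : ℝ) : EReal) = fracValue tf U ftil v g h t0 x0 := by
    rw [hopt]; exact hV t0 ⟨le_rfl, ht0f.le⟩ x0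
  -- Value along the optimal trajectory.
  have hVal : ∀ s (hs : s ∈ Icc t0 tf),
      V s (pstar.x s) = fracCost tf v g h (pstar.restrictTo hftil hUc hs) := by
    intro s hs
    have hle : V s (pstar.x s) ≤ fracCost tf v g h (pstar.restrictTo hftil hUc hs) := by
      have h1 : ((V s (pstar.x s) : ℝ) : EReal)
          ≤ ((fracCost tf v g h (pstar.restrictTo hftil hUc hs) : ℝ) : EReal) := by
        rw [hV s hs, fracValue]; exact iInf_le _ _
      exact EReal.coe_le_coe_iff.1 h1
    have hd := dpp_le hftil hUc v hv g hg h V hV (left_mem_Icc.2 ht0f.le) pstar hs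
    have hcost := pstar.cost_restrictTo hftil hUc v hv g hg h hs
    rw [hopt] at hcost
    linarith
  set xt := pstar.x t with hxt
  set W : ℝ × EuclideanSpace ℝ (Fin n) → ℝ := fun q => V q.1 q.2 with hW
  set L := fderiv ℝ W (t, xt) with hL
  have hDt : HasDerivAt (fun s => V s (pstar.x t)) (L (1, 0)) t := by
    have hγ : HasDerivAt (fun s : ℝ => (s, xt)) ((1 : ℝ), (0 : EuclideanSpace ℝ (Fin n))) t :=
      (hasDerivAt_id t).prodMk (hasDerivAt_const t _)
    exact hVdiff.hasFDerivAt.comp_hasDerivAt t hγ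
  have hDt' : deriv (fun s => V s (pstar.x t)) t = L (1, 0) := hDt.deriv
  have hgrad : ∀ w, ⟪gradient (fun y => V t y) xt, w⟫ = L (0, w) := by
    intro w
    have hδ : HasFDerivAt (fun y : EuclideanSpace ℝ (Fin n) => ((t : ℝ), y))
        ((0 : EuclideanSpace ℝ (Fin n) →L[ℝ] ℝ).prod (ContinuousLinearMap.id ℝ _)) xt :=
      (hasFDerivAt_const t xt).prodMk (hasFDerivAt_id xt)
    have hcomp : HasFDerivAt (fun y => V t y)
        (L.comp ((0 : EuclideanSpace ℝ (Fin n) →L[ℝ] ℝ).prod (ContinuousLinearMap.id ℝ _)))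
        xt := hVdiff.hasFDerivAt.comp xt hδ
    have h1 : ⟪gradient (fun y => V t y) xt, w⟫ = (fderiv ℝ (fun y => V t y) xt) w :=
      InnerProductSpace.toDual_symm_apply
    rw [h1, hcomp.fderiv]
    simp
  have hL1f : ∀ w, L (1, w) = L (1, 0) + L (0, w) := by
    intro w
    rw [← map_add]
    norm_num
  -- Key derivative computation for pairs starting at `(t, xt)`.
  have hkey : ∀ (p : AdmissiblePair tf U ftil t xt), ContinuousWithinAt p.u (Ici t) t →
      HasDerivWithinAt (fun s =>
        (∑ j, (1 / Real.Gamma (v j)) *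
            ∫ τ in t..s, (tf - τ) ^ (v j - 1) * g j τ (p.x τ) (p.u τ))
          + V s (p.x s) - V t xt)
        ((∑ j, (1 / Real.Gamma (v j)) * ((tf - t) ^ (v j - 1) * g j t xt (p.u t)))
          + (L (1, 0) + L (0, ftil t xt (p.u t)))) (Ici t) t := by
    intro p hrc
    have hpxt : p.x t = xt := p.x_start httf.le
    have hsum : HasDerivWithinAt (fun s => ∑ j, (1 / Real.Gamma (v j)) *
        ∫ τ in t..s, (tf - τ) ^ (v j - 1) * g j τ (p.x τ) (p.u τ))
        (∑ j, (1 / Real.Gamma (v j)) * ((tf - t) ^ (v j - 1) * g j t xt (p.u t))) (Ici t) t := by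
      refine HasDerivWithinAt.fun_sum fun j _ => ?_
      have := (p.hasDerivWithinAt_cost hUc (hv j) (hg j) httf hrc).const_mul
        (1 / Real.Gamma (v j))
      rwa [hpxt] at this
    have hx := p.hasDerivWithinAt_x hftil hUc httf hrc
    have hγ : HasDerivWithinAt (fun s => (s, p.x s))
        ((1 : ℝ), ftil t (p.x t) (p.u t)) (Ici t) t :=
      (hasDerivWithinAt_id t _).prodMk hx
    have hVd2 : HasFDerivAt W L (t, p.x t) := by rw [hpxt]; exact hVdiff.hasFDerivAt
    have hVc : HasDerivWithinAt (fun s => W (s, p.x s))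
        (L (1, ftil t xt (p.u t))) (Ici t) t := by
      have := hVd2.comp_hasDerivWithinAt t hγ
      rwa [hpxt] at this
    have hfin := (hsum.add hVc).sub_const (V t xt)
    rwa [hL1f] at hfin
  -- value at `t` of the key functions is `0`
  have hkey0 : ∀ (p : AdmissiblePair tf U ftil t xt),
      (∑ j, (1 / Real.Gamma (v j)) *
          ∫ τ in t..t, (tf - τ) ^ (v j - 1) * g j τ (p.x τ) (p.u τ))
        + V t (p.x t) - V t xt = 0 := by
    intro p
    rw [p.x_start httf.le]
    simp
  -- Membership: the optimal control attains the minimum.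
  set ω₀ := pstar.u t with hω₀
  have hω₀U : ω₀ ∈ U := pstar.u_mem t htm
  set p₀ := pstar.restrictTo hftil hUc htm with hp₀
  have hp₀x : p₀.x = pstar.x := rfl
  have hp₀u : p₀.u = pstar.u := rfl
  have hA : ∀ s ∈ Icc t tf, ∀ j,
      (∫ τ in t0..s, (tf - τ) ^ (v j - 1) * g j τ (pstar.x τ) (pstar.u τ))
        = (∫ τ in t0..t, (tf - τ) ^ (v j - 1) * g j τ (pstar.x τ) (pstar.u τ))
          + ∫ τ in t..s, (tf - τ) ^ (v j - 1) * g j τ (pstar.x τ) (pstar.u τ) := by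
    intro s hs j
    obtain ⟨C, hC⟩ := pstar.bound (g j) (hg j) hUc
    exact (intervalIntegral.integral_add_adjacent_intervals
      (kernel_mul_intInt (hv j) (pstar.aesm (g j) (hg j)) hC (left_mem_Icc.2 ht0f.le) htm)
      (kernel_mul_intInt (hv j) (pstar.aesm (g j) (hg j)) hC htm ⟨htm.1.trans hs.1, hs.2⟩)).symm
  have hφ0 : ∀ s ∈ Icc t tf,
      (∑ j, (1 / Real.Gamma (v j)) *
          ∫ τ in t..s, (tf - τ) ^ (v j - 1) * g j τ (p₀.x τ) (p₀.u τ))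
        + V s (p₀.x s) - V t xt = 0 := by
    intro s hs
    have hsm : s ∈ Icc t0 tf := ⟨htm.1.trans hs.1, hs.2⟩
    have h1 := hVal s hsm
    have h2 := hVal t htm
    have h3 := pstar.cost_restrictTo hftil hUc v hv g hg h hsm
    have h4 := pstar.cost_restrictTo hftil hUc v hv g hg h htm
    rw [hp₀x, hp₀u, hxt]
    have e1 : V s (pstar.x s) = fracCost tf v g h pstar
        - ∑ j, (1 / Real.Gamma (v j)) *
            ∫ τ in t0..s, (tf - τ) ^ (v j - 1) * g j τ (pstar.x τ) (pstar.u τ) := by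
      rw [h1]; linarith
    have e2 : V t (pstar.x t) = fracCost tf v g h pstar
        - ∑ j, (1 / Real.Gamma (v j)) *
            ∫ τ in t0..t, (tf - τ) ^ (v j - 1) * g j τ (pstar.x τ) (pstar.u τ) := by
      rw [h2]; linarith
    rw [e1, e2]
    have e3 : ∀ j, (1 / Real.Gamma (v j)) *
        (∫ τ in t0..s, (tf - τ) ^ (v j - 1) * g j τ (pstar.x τ) (pstar.u τ))
        = (1 / Real.Gamma (v j)) *
            (∫ τ in t0..t, (tf - τ) ^ (v j - 1) * g j τ (pstar.x τ) (pstar.u τ))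
          + (1 / Real.Gamma (v j)) *
            (∫ τ in t..s, (tf - τ) ^ (v j - 1) * g j τ (pstar.x τ) (pstar.u τ)) := by
      intro j; rw [hA s hs j]; ring
    simp only [e3, Finset.sum_add_distrib]
    ring
  -- the derivative of the vanishing function is zero
  have hrc0 : ContinuousWithinAt p₀.u (Ici t) t := by rw [hp₀u]; exact hu_rc
  have hD0 := hkey p₀ hrc0
  have hDzero : (∑ j, (1 / Real.Gamma (v j)) * ((tf - t) ^ (v j - 1) * g j t xt (p₀.u t)))
      + (L (1, 0) + L (0, ftil t xt (p₀.u t))) = 0 := by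
    have hpos := deriv_nonneg_of_nonneg httf hD0 (hkey0 p₀)
      (fun s hs => le_of_eq (hφ0 s ⟨hs.1.le, hs.2⟩).symm)
    have hneg := deriv_nonneg_of_nonneg httf hD0.neg
      (by rw [Pi.neg_apply, hkey0 p₀]; norm_num)
      (fun s hs => by rw [Pi.neg_apply, hφ0 s ⟨hs.1.le, hs.2⟩]; norm_num)
    linarith
  have hp₀ut : p₀.u t = ω₀ := rfl
  constructor
  · constructor
    · -- membership
      refine ⟨ω₀, hω₀U, ?_⟩
      dsimp only
      rw [hp₀ut] at hDzero
      have : (∑ j, (1 / Real.Gamma (v j)) * (tf - t) ^ (v j - 1) * g j t xt ω₀)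
          = ∑ j, (1 / Real.Gamma (v j)) * ((tf - t) ^ (v j - 1) * g j t xt ω₀) := by
        simp only [mul_assoc]
      rw [hDt', hgrad, this]
      linarith
    · -- lower bound
      rintro y ⟨ω, hωU, rfl⟩
      dsimp only
      obtain ⟨p, hprc, hput⟩ := hreach ω hωU
      have hd := hkey p hprc
      have hnonneg : ∀ s ∈ Ioc t tf,
          0 ≤ (∑ j, (1 / Real.Gamma (v j)) *
              ∫ τ in t..s, (tf - τ) ^ (v j - 1) * g j τ (p.x τ) (p.u τ))
            + V s (p.x s) - V t xt := by
        intro s hs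
        have := dpp_le hftil hUc v hv g hg h V hV htm p (s := s) ⟨hs.1.le, hs.2⟩
        linarith
      have hpos := deriv_nonneg_of_nonneg httf hd (hkey0 p) hnonneg
      rw [hput] at hpos
      have heq : (∑ j, (1 / Real.Gamma (v j)) * (tf - t) ^ (v j - 1) * g j t xt ω)
          = ∑ j, (1 / Real.Gamma (v j)) * ((tf - t) ^ (v j - 1) * g j t xt ω) := by
        simp only [mul_assoc]
      rw [hDt', hgrad, heq]
      linarith
  · exact part2
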